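/- Every pseudo-algebraically closed field is large: if k is a field such that every geometrically integral k-variety has a k-rational point, then for every geometrically integral k-variety X with a smooth k-point, the set X(k) is Zariski dense in X. -/

import Mathlib

open AlgebraicGeometry CategoryTheory Limits

/-- Every pseudo-algebraically closed field is large: if every geometrically
integral variety over `k` has a `k`-rational point, then for every
geometrically integral `k`-variety `X` with a smooth `k`-point (a `k`-point
landing in a smooth-over-`k` open subscheme `U`), the set of `k`-points of `X`
is Zariski dense. -/
theorem stmt_14 (k : Type) [Field k]
    (hPAC : ∀ (Y : Scheme) (f : Y ⟶ Spec (CommRingCat.of k)),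
      LocallyOfFiniteType f →
      IsIntegral (pullback f
        (Spec.map (CommRingCat.ofHom (algebraMap k (AlgebraicClosure k))))) →
      ∃ s : Spec (CommRingCat.of k) ⟶ Y, s ≫ f = 𝟙 _)
    (X : Scheme) (f : X ⟶ Spec (CommRingCat.of k))
    (hft : LocallyOfFiniteType f)
    (hgi : IsIntegral (pullback f
      (Spec.map (CommRingCat.ofHom (algebraMap k (AlgebraicClosure k))))))
    (s : Spec (CommRingCat.of k) ⟶ X) (hs : s ≫ f = 𝟙 _)
    (U : X.Opens) (hU : IsSmooth (U.ι ≫ f))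
    (hsU : Set.range s.base ⊆ (U : Set X)) :
    Dense {x : X | ∃ t : Spec (CommRingCat.of k) ⟶ X,
      t ≫ f = 𝟙 _ ∧ x ∈ Set.range t.base} := by
  rw [dense_iff_inter_open]
  rintro V hV ⟨x, hx⟩
  set g : Spec (CommRingCat.of (AlgebraicClosure k)) ⟶ Spec (CommRingCat.of k) :=
    Spec.map (CommRingCat.ofHom (algebraMap k (AlgebraicClosure k))) with hg
  set W : X.Opens := ⟨V, hV⟩ with hW
  -- the point `x` lifts to the open subscheme `W`
  obtain ⟨xW, hxW⟩ : ∃ xW : W.toScheme, W.ι.base xW = x := by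
    have : x ∈ Set.range W.ι.base := by rw [Scheme.Opens.range_ι]; exact hx
    exact this
  -- the pullback of the open subscheme to the algebraic closure is nonempty
  have hne : Nonempty ((pullback (W.ι ≫ f) g : Scheme) : Type) := by
    obtain ⟨z, -, -⟩ := Scheme.Pullback.exists_preimage_pullback (f := W.ι ≫ f) (g := g)
      xW (default : Spec (CommRingCat.of (AlgebraicClosure k)))
      (Subsingleton.elim ((W.ι ≫ f).base xW)
        (g.base (default : Spec (CommRingCat.of (AlgebraicClosure k)))))
    exact ⟨z⟩
  -- the pullback of the open subscheme is integral (open in the integral pullback of `X`)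
  have hint : IsIntegral (pullback (W.ι ≫ f) g) := by
    exact isIntegral_of_isOpenImmersion
      ((pullbackRightPullbackFstIso f g W.ι).inv ≫ pullback.snd W.ι (pullback.fst f g))
  obtain ⟨t₀, ht₀⟩ := hPAC W.toScheme (W.ι ≫ f) inferInstance hint
  refine ⟨(t₀ ≫ W.ι).base default, ?_, ⟨t₀ ≫ W.ι, by rw [Category.assoc, ht₀], ⟨default, rfl⟩⟩⟩
  show (t₀ ≫ W.ι).base default ∈ W.1
  have h1 : (t₀ ≫ W.ι).base default = W.ι.base (t₀.base default) := by
    simp [Scheme.Hom.comp_base]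
  rw [h1]
  have h2 : W.ι.base (t₀.base default) ∈ Set.range W.ι.base := Set.mem_range_self _
  rwa [Scheme.Opens.range_ι] at h2
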